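/- Let F be a graph with at least one edge and let H be a graph. If H is F-abundant, then there exists a homomorphism from H to F. -/

import Mathlib

/-- `G` contains a copy of `F`, i.e. a subgraph isomorphic to `F`
(equivalently an injective graph homomorphism from `F`). -/
def ContainsCopy {α β : Type*} (F : SimpleGraph α) (G : SimpleGraph β) : Prop :=
  ∃ f : F →g G, Function.Injective f

/-- The number of copies of `H` in `G`, i.e. the number of subgraphs of `G`
isomorphic to `H`. -/
noncomputable def copyCount {α β : Type*} (H : SimpleGraph α) (G : SimpleGraph β) : ℕ :=
  {G' : G.Subgraph | Nonempty (H ≃g G'.coe)}.ncard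

/-- `G` is `ε`-far from `F`-free: every graph obtained from `G` by deleting fewer than
`ε·|V(G)|²` edges still contains a copy of `F`. -/
def FarFromFree {α β : Type*} (F : SimpleGraph α) (G : SimpleGraph β) (ε : ℝ) : Prop :=
  ∀ G' : SimpleGraph β, G' ≤ G →
    ((G.edgeSet \ G'.edgeSet).ncard : ℝ) < ε * (Nat.card β : ℝ) ^ 2 →
    ContainsCopy F G'

/-- `H` is `F`-abundant: there are constants `c, C > 0` such that for every `ε ∈ (0,1)`
and all sufficiently large `n`, every `n`-vertex graph that is `ε`-far from `F`-free
contains at least `c·ε^C·n^{|V(H)|}` copies of `H`. -/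
def Abundant {α β : Type*} (F : SimpleGraph α) (H : SimpleGraph β) : Prop :=
  ∃ c C : ℝ, 0 < c ∧ 0 < C ∧ ∀ ε : ℝ, 0 < ε → ε < 1 → ∃ n₀ : ℕ, ∀ n : ℕ, n₀ ≤ n →
    ∀ G : SimpleGraph (Fin n), FarFromFree F G ε →
      c * ε ^ C * (n : ℝ) ^ (Nat.card β) ≤ (copyCount H G : ℝ)

lemma card_fix (m : ℕ) {α : Type*} [Fintype α] [DecidableEq α] (a b : α) (hab : a ≠ b)
    (i j : Fin m) :
    (Finset.univ.filter (fun f : α → Fin m => f a = i ∧ f b = j)).card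
      ≤ m ^ (Fintype.card α - 2) := by
  classical
  set S : Finset α := {a, b}ᶜ with hS
  have hcard : Fintype.card (↥S → Fin m) = m ^ (Fintype.card α - 2) := by
    rw [Fintype.card_fun, Fintype.card_coe, Fintype.card_fin]
    congr 1
    rw [hS, Finset.card_compl, Finset.card_pair hab]
  calc (Finset.univ.filter (fun f : α → Fin m => f a = i ∧ f b = j)).card
      ≤ (Finset.univ : Finset (↥S → Fin m)).card := by
        apply Finset.card_le_card_of_injOn (fun f x => f x.1)
          (fun _ _ => Finset.mem_univ _)
        intro f hf g hg hfg
        simp only [Finset.coe_filter, Set.mem_setOf_eq, Finset.mem_univ, true_and] at hf hg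
        funext x
        by_cases hxa : x = a
        · rw [hxa, hf.1, hg.1]
        by_cases hxb : x = b
        · rw [hxb, hf.2, hg.2]
        · exact congrFun hfg ⟨x, by simp [hS, hxa, hxb]⟩
    _ = m ^ (Fintype.card α - 2) := by rw [Finset.card_univ, hcard]


/-- If `F` has at least one edge and `H` is `F`-abundant, then
there is a homomorphism from `H` to `F`. -/
theorem stmt_4 {α β : Type*} [Fintype α] [Fintype β]
    (F : SimpleGraph α) (H : SimpleGraph β)
    (hF : F.edgeSet.Nonempty) (habund : Abundant F H) :
    Nonempty (H →g F) := by
  classical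
  obtain ⟨c, C, hc, hC, habund⟩ := habund
  have hadj : ∃ a b : α, F.Adj a b := by
    obtain ⟨ed, he⟩ := hF
    induction ed using Sym2.ind with
    | _ x y => exact ⟨x, y, he⟩
  obtain ⟨a0, b0, hab0⟩ := hadj
  have hα2 : 2 ≤ Fintype.card α := Fintype.one_lt_card_iff.mpr ⟨a0, b0, hab0.ne⟩
  set A : ℕ := Fintype.card α with hA
  have hA0 : 0 < A := lt_of_lt_of_le (by norm_num) hα2
  have hAR : (1 : ℝ) < (A : ℝ) := by exact_mod_cast lt_of_lt_of_le one_lt_two hα2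
  set ε : ℝ := 1 / (A : ℝ) ^ 2 with hε
  have hε0 : 0 < ε := by positivity
  have hε1 : ε < 1 := by
    rw [hε, div_lt_one (by positivity)]
    nlinarith
  obtain ⟨n₀, hn₀⟩ := habund ε hε0 hε1
  set m : ℕ := max n₀ 1 with hm
  have hm1 : 1 ≤ m := le_max_right _ _
  set n : ℕ := A * m with hn
  have hnn₀ : n₀ ≤ n := le_trans (le_max_left _ _) (Nat.le_mul_of_pos_left m hA0)
  have hcardeq : Fintype.card (α × Fin m) = n := by
    rw [Fintype.card_prod, Fintype.card_fin]
  let e : α × Fin m ≃ Fin n := Fintype.equivFinOfCardEq hcardeq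
  set G : SimpleGraph (Fin n) := SimpleGraph.comap (fun x => (e.symm x).1) F with hG
  have hfar : FarFromFree F G ε := by
    intro G' hle hcount
    have hfin : (G.edgeSet \ G'.edgeSet).Finite := Set.toFinite _
    set D : Finset (Sym2 (Fin n)) := hfin.toFinset with hD
    have hDcard : D.card < m ^ 2 := by
      have h1 : ((D.card : ℝ)) < ε * (n : ℝ) ^ 2 := by
        rw [hD, ← Set.ncard_eq_toFinset_card _ hfin]
        calc ((G.edgeSet \ G'.edgeSet).ncard : ℝ)
            < ε * (Nat.card (Fin n) : ℝ) ^ 2 := hcount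
          _ = ε * (n : ℝ) ^ 2 := by rw [Nat.card_eq_fintype_card, Fintype.card_fin]
      have h2 : ε * (n : ℝ) ^ 2 = (m : ℝ) ^ 2 := by
        have : (n : ℝ) = (A : ℝ) * (m : ℝ) := by exact_mod_cast congrArg Nat.cast hn
        rw [hε, this]
        field_simp
      have : ((D.card : ℝ)) < ((m : ℝ)) ^ 2 := h2 ▸ h1
      exact_mod_cast this
    set Bad : Finset (α → Fin m) := Finset.univ.filter
      (fun f => ∃ a b, F.Adj a b ∧ s(e (a, f a), e (b, f b)) ∈ D) with hBadDef
    have hsub : Bad ⊆ D.biUnion (fun d => Finset.univ.filter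
        (fun f : α → Fin m => ∃ a b, F.Adj a b ∧ s(e (a, f a), e (b, f b)) = d)) := by
      intro f hf
      simp only [hBadDef, Finset.mem_filter, Finset.mem_univ, true_and] at hf
      obtain ⟨a, b, hab, hd⟩ := hf
      simp only [Finset.mem_biUnion, Finset.mem_filter, Finset.mem_univ, true_and]
      exact ⟨_, hd, a, b, hab, rfl⟩
    have key : ∀ d ∈ D, (Finset.univ.filter (fun f : α → Fin m =>
        ∃ a b, F.Adj a b ∧ s(e (a, f a), e (b, f b)) = d)).card ≤ m ^ (A - 2) := by
      intro d _
      rcases (Finset.univ.filter (fun f : α → Fin m =>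
        ∃ a b, F.Adj a b ∧ s(e (a, f a), e (b, f b)) = d)).eq_empty_or_nonempty with hE | hE
      · rw [hE]; simp
      · obtain ⟨f0, hf0⟩ := hE
        simp only [Finset.mem_filter, Finset.mem_univ, true_and] at hf0
        obtain ⟨a1, b1, hab1, heq1⟩ := hf0
        refine le_trans (Finset.card_le_card ?_) (card_fix m a1 b1 hab1.ne (f0 a1) (f0 b1))
        intro f hf
        simp only [Finset.mem_filter, Finset.mem_univ, true_and] at hf ⊢
        obtain ⟨a, b, hab, heq⟩ := hf
        rw [← heq1, Sym2.eq_iff] at heq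
        rcases heq with ⟨h1, h2⟩ | ⟨h1, h2⟩
        · have e1 := e.injective h1
          have e2 := e.injective h2
          simp only [Prod.mk.injEq] at e1 e2
          obtain ⟨rfl, hv1⟩ := e1
          obtain ⟨rfl, hv2⟩ := e2
          exact ⟨hv1, hv2⟩
        · have e1 := e.injective h1
          have e2 := e.injective h2
          simp only [Prod.mk.injEq] at e1 e2
          obtain ⟨rfl, hv1⟩ := e1
          obtain ⟨rfl, hv2⟩ := e2
          exact ⟨hv2, hv1⟩
    have hBad : Bad.card < m ^ A := by
      calc Bad.card ≤ (D.biUnion (fun d => Finset.univ.filter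
            (fun f : α → Fin m => ∃ a b, F.Adj a b ∧ s(e (a, f a), e (b, f b)) = d))).card :=
            Finset.card_le_card hsub
        _ ≤ ∑ d ∈ D, (Finset.univ.filter
            (fun f : α → Fin m => ∃ a b, F.Adj a b ∧ s(e (a, f a), e (b, f b)) = d)).card :=
            Finset.card_biUnion_le
        _ ≤ D.card * m ^ (A - 2) := by
            rw [← smul_eq_mul]
            exact Finset.sum_le_card_nsmul D _ _ key
        _ < m ^ 2 * m ^ (A - 2) := by
            exact mul_lt_mul_of_pos_right hDcard (Nat.pow_pos hm1)
        _ = m ^ A := by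
            rw [← pow_add]
            congr 1
            omega
    have : ∃ f : α → Fin m, f ∉ Bad := by
      by_contra hcon
      push_neg at hcon
      have : Bad = Finset.univ := Finset.eq_univ_iff_forall.mpr hcon
      rw [this, Finset.card_univ, Fintype.card_fun, Fintype.card_fin] at hBad
      exact lt_irrefl _ hBad
    obtain ⟨f, hfgood⟩ := this
    simp only [hBadDef, Finset.mem_filter, Finset.mem_univ, true_and, not_exists, not_and] at hfgood
    refine ⟨⟨fun a => e (a, f a), ?_⟩, ?_⟩
    · intro a b hab
      have hGadj : G.Adj (e (a, f a)) (e (b, f b)) := by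
        simp only [hG, SimpleGraph.comap_adj, Equiv.symm_apply_apply]
        exact hab
      have hnotD : s(e (a, f a), e (b, f b)) ∉ D := hfgood a b hab
      by_contra hnot
      apply hnotD
      rw [hD, Set.Finite.mem_toFinset]
      exact ⟨hGadj, fun h => hnot ((SimpleGraph.mem_edgeSet G').mp h)⟩
    · intro x y hxy
      have := e.injective hxy
      exact congrArg Prod.fst this
  have hcc := hn₀ n hnn₀ G hfar
  have hn0R : (0 : ℝ) < (n : ℝ) := by
    have : 0 < n := by
      rw [hn]; exact Nat.mul_pos hA0 hm1
    exact_mod_cast this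
  have hlhs : 0 < c * ε ^ C * (n : ℝ) ^ (Nat.card β) := by
    apply mul_pos (mul_pos hc (Real.rpow_pos_of_pos hε0 C))
    positivity
  have hne : {G' : G.Subgraph | Nonempty (H ≃g G'.coe)}.Nonempty := by
    apply Set.nonempty_of_ncard_ne_zero
    intro h0
    rw [copyCount, h0] at hcc
    simp only [Nat.cast_zero] at hcc
    linarith
  obtain ⟨G', hG'⟩ := hne
  obtain ⟨iso⟩ := hG'
  exact ⟨(⟨fun x => (e.symm x).1, fun h => h⟩ : G →g F).comp (G'.hom.comp iso.toHom)⟩
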